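/- arXiv:1102.5523 — 2 statements merged into one kernel-verified Lean document; each statement's English description precedes it below -/
import Mathlib

section
/- Let G be a connected simple graph with maximum degree 3 and let φ be a δ-minimum edge-colouring of G. Then for any edge e = uv coloured δ by φ, there exist two distinct colours x, y ∈ {α, β, γ} such that the connected component of φ(x,y) containing u also contains v and is a path of even length joining u and v. Moreover, e has either one end of degree 2 and the other of degree 3, or both ends of degree 3 (i.e., not both ends of e have degree 2). -/
open SimpleGraph

namespace Parsimonious

/-- `φ` is a proper edge colouring of the set `F` of edges: two distinct edges of `F`
sharing a vertex receive different colours. -/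
def ProperOn {V α : Type*} (F : Set (Sym2 V)) (φ : Sym2 V → α) : Prop :=
  ∀ ⦃e₁⦄, e₁ ∈ F → ∀ ⦃e₂⦄, e₂ ∈ F → e₁ ≠ e₂ → (∃ v, v ∈ e₁ ∧ v ∈ e₂) → φ e₁ ≠ φ e₂

/-- `G` admits a proper edge colouring with `k` colours. -/
def EdgeColorable {V : Type*} (G : SimpleGraph V) (k : ℕ) : Prop :=
  ∃ φ : Sym2 V → Fin k, ProperOn G.edgeSet φ

/-- `γ(G)`: the largest fraction of the edges of `G` spanning a properly
3-edge-colourable subgraph. -/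
noncomputable def gamma {V : Type*} (G : SimpleGraph V) : ℝ :=
  sSup {r : ℝ | ∃ F : Set (Sym2 V), F ⊆ G.edgeSet ∧
    (∃ φ : Sym2 V → Fin 3, ProperOn F φ) ∧
    r = (F.ncard : ℝ) / (G.edgeSet.ncard : ℝ)}

/-- `s(G)`: the minimum number of edges coloured `δ` (colour `3`) over all proper
edge colourings of `G` with the four colours `α, β, γ, δ` (= `0, 1, 2, 3`). -/
noncomputable def sColor {V : Type*} (G : SimpleGraph V) : ℕ :=
  sInf {k : ℕ | ∃ φ : Sym2 V → Fin 4, ProperOn G.edgeSet φ ∧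
    k = {e ∈ G.edgeSet | φ e = 3}.ncard}

/-- `φ` is a δ-minimum edge colouring of `G`. -/
def IsDeltaMin {V : Type*} (G : SimpleGraph V) (φ : Sym2 V → Fin 4) : Prop :=
  ProperOn G.edgeSet φ ∧ {e ∈ G.edgeSet | φ e = 3}.ncard = sColor G

/-- The odd girth of `G`: the length of a shortest odd cycle. -/
noncomputable def oddGirth {V : Type*} (G : SimpleGraph V) : ℕ :=
  sInf {n : ℕ | Odd n ∧ ∃ (v : V) (c : G.Walk v v), c.IsCycle ∧ c.length = n}

/-- The Petersen graph, i.e. the Kneser graph `K(5,2)`. -/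
def petersen : SimpleGraph {s : Finset (Fin 5) // s.card = 2} where
  Adj a b := Disjoint a.1 b.1
  symm := ⟨fun _ _ h => h.symm⟩
  loopless := ⟨fun a h => by
    have h2 : a.1 = ∅ := disjoint_self.mp h
    have hc := a.2
    rw [show a.1 = ∅ from h2] at hc
    simp at hc⟩

/-- `φ(x,y)`: the subgraph of `G` spanned by the edges coloured `x` or `y`. -/
def twoColour {V : Type*} (G : SimpleGraph V) (φ : Sym2 V → Fin 4) (x y : Fin 4) :
    SimpleGraph V :=
  SimpleGraph.fromEdgeSet {e | e ∈ G.edgeSet ∧ (φ e = x ∨ φ e = y)}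

/-- An edge is in `A_φ` when it is coloured `δ` and its ends are joined by a path
of `φ(α,β)`. -/
def InA {V : Type*} (G : SimpleGraph V) (φ : Sym2 V → Fin 4) (e : Sym2 V) : Prop :=
  e ∈ G.edgeSet ∧ φ e = 3 ∧ ∀ u v : V, e = s(u, v) → (twoColour G φ 0 1).Reachable u v

/-- An edge is in `B_φ` when it is coloured `δ` and its ends are joined by a path
of `φ(β,γ)`. -/
def InB {V : Type*} (G : SimpleGraph V) (φ : Sym2 V → Fin 4) (e : Sym2 V) : Prop :=
  e ∈ G.edgeSet ∧ φ e = 3 ∧ ∀ u v : V, e = s(u, v) → (twoColour G φ 1 2).Reachable u v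

/-- An edge is in `C_φ` when it is coloured `δ` and its ends are joined by a path
of `φ(α,γ)`. -/
def InC {V : Type*} (G : SimpleGraph V) (φ : Sym2 V → Fin 4) (e : Sym2 V) : Prop :=
  e ∈ G.edgeSet ∧ φ e = 3 ∧ ∀ u v : V, e = s(u, v) → (twoColour G φ 0 2).Reachable u v

/-- The edge set of the odd cycle `C_{A_φ}(e)` associated to an edge `e ∈ A_φ`:
the component of `φ(α,β)` containing the ends of `e`, together with `e`. -/
def assocCycleA {V : Type*} (G : SimpleGraph V) (φ : Sym2 V → Fin 4) (e : Sym2 V) :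
    Set (Sym2 V) :=
  insert e {f | f ∈ G.edgeSet ∧ (φ f = 0 ∨ φ f = 1) ∧
    ∃ x, x ∈ f ∧ ∃ y, y ∈ e ∧ (twoColour G φ 0 1).Reachable y x}

/-- The edge set of the odd cycle `C_{B_φ}(e)` associated to an edge `e ∈ B_φ`. -/
def assocCycleB {V : Type*} (G : SimpleGraph V) (φ : Sym2 V → Fin 4) (e : Sym2 V) :
    Set (Sym2 V) :=
  insert e {f | f ∈ G.edgeSet ∧ (φ f = 1 ∨ φ f = 2) ∧
    ∃ x, x ∈ f ∧ ∃ y, y ∈ e ∧ (twoColour G φ 1 2).Reachable y x}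

/-- The edge set of the odd cycle `C_{C_φ}(e)` associated to an edge `e ∈ C_φ`. -/
def assocCycleC {V : Type*} (G : SimpleGraph V) (φ : Sym2 V → Fin 4) (e : Sym2 V) :
    Set (Sym2 V) :=
  insert e {f | f ∈ G.edgeSet ∧ (φ f = 0 ∨ φ f = 2) ∧
    ∃ x, x ∈ f ∧ ∃ y, y ∈ e ∧ (twoColour G φ 0 2).Reachable y x}

/-- The three sets `A_φ`, `B_φ`, `C_φ`. -/
def colourClass {V : Type*} (G : SimpleGraph V) (φ : Sym2 V → Fin 4) :
    Fin 3 → Set (Sym2 V)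
  | 0 => {e | InA G φ e}
  | 1 => {e | InB G φ e}
  | 2 => {e | InC G φ e}

/-- `C` is one of the odd cycles associated to the δ-coloured edge `e`. -/
def IsAssocCycle {V : Type*} (G : SimpleGraph V) (φ : Sym2 V → Fin 4) (e : Sym2 V)
    (C : Set (Sym2 V)) : Prop :=
  (InA G φ e ∧ C = assocCycleA G φ e) ∨
  (InB G φ e ∧ C = assocCycleB G φ e) ∨
  (InC G φ e ∧ C = assocCycleC G φ e)


section Aux

variable {V : Type*} {G : SimpleGraph V} {φ : Sym2 V → Fin 4} {x z : Fin 4}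

lemma twoColour_adj {a b : V} :
    (twoColour G φ x z).Adj a b ↔ G.Adj a b ∧ (φ s(a, b) = x ∨ φ s(a, b) = z) := by
  unfold twoColour
  rw [fromEdgeSet_adj]
  constructor
  · rintro ⟨⟨h1, h2⟩, -⟩; exact ⟨h1, h2⟩
  · rintro ⟨h1, h2⟩; exact ⟨⟨h1, h2⟩, G.ne_of_adj h1⟩

lemma exists_adj_of_mem_edge {f : Sym2 V} {w : V} (hf : f ∈ G.edgeSet) (hw : w ∈ f) :
    ∃ b, G.Adj w b ∧ f = s(w, b) := by
  induction f with
  | _ a c =>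
    rw [Sym2.mem_iff] at hw
    rcases hw with rfl | rfl
    · exact ⟨c, hf, rfl⟩
    · exact ⟨a, (G.mem_edgeSet.mp hf).symm, Sym2.eq_swap⟩

def MissingAt (G : SimpleGraph V) (φ : Sym2 V → Fin 4) (c : Fin 4) (a : V) : Prop :=
  ∀ b, G.Adj a b → φ s(a, b) ≠ c

/-- swap of the two colours x and z -/
def swapAt (x z c : Fin 4) : Fin 4 := if c = x then z else if c = z then x else c

section Kempe

variable (hp : ProperOn G.edgeSet φ) (u : V)

/-- the Kempe-swapped colouring: swap x and z on the component of `u` in `φ(x,z)`. -/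
noncomputable def kempe (G : SimpleGraph V) (φ : Sym2 V → Fin 4) (x z : Fin 4) (u : V) :
    Sym2 V → Fin 4 := by
  classical
  exact fun f =>
    if f ∈ G.edgeSet ∧ (φ f = x ∨ φ f = z) ∧ (∃ w ∈ f, (twoColour G φ x z).Reachable u w)
    then swapAt x z (φ f) else φ f

variable {u : V}

/-- the condition under which an edge is swapped -/
def Sw (G : SimpleGraph V) (φ : Sym2 V → Fin 4) (x z : Fin 4) (u : V) (f : Sym2 V) : Prop :=
  f ∈ G.edgeSet ∧ (φ f = x ∨ φ f = z) ∧ (∃ w ∈ f, (twoColour G φ x z).Reachable u w)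

lemma kempe_eq_of_sw {f : Sym2 V} (h : Sw G φ x z u f) :
    kempe G φ x z u f = swapAt x z (φ f) := by
  unfold kempe; split <;> simp_all [Sw]

lemma kempe_eq_of_not_sw {f : Sym2 V} (h : ¬ Sw G φ x z u f) :
    kempe G φ x z u f = φ f := by
  unfold kempe; split <;> simp_all [Sw]

/-- all vertices of a swapped edge are reachable from u -/
lemma reach_of_sw {f : Sym2 V} (h : Sw G φ x z u f) {w : V} (hw : w ∈ f) :
    (twoColour G φ x z).Reachable u w := by
  obtain ⟨hf, hcol, w₀, hw₀, hr⟩ := h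
  obtain ⟨b, hb, rfl⟩ := exists_adj_of_mem_edge hf hw₀
  have hadj : (twoColour G φ x z).Adj w₀ b := twoColour_adj.mpr ⟨hb, hcol⟩
  rw [Sym2.mem_iff] at hw
  rcases hw with rfl | rfl
  · exact hr
  · exact hr.trans hadj.reachable

lemma swapAt_mem {c : Fin 4} (h : c = x ∨ c = z) : swapAt x z c = x ∨ swapAt x z c = z := by
  unfold swapAt; rcases h with rfl | rfl <;> split_ifs <;> simp_all

lemma swapAt_inj {c d : Fin 4} (h : swapAt x z c = swapAt x z d) : c = d := by
  unfold swapAt at h; split_ifs at h <;> simp_all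

lemma swapAt_ne_of_ne {c : Fin 4} (hx : x ≠ 3) (hz : z ≠ 3) (h : c ≠ 3) :
    swapAt x z c ≠ 3 := by
  unfold swapAt; split_ifs <;> assumption

lemma kempe_proper (hp : ProperOn G.edgeSet φ) :
    ProperOn G.edgeSet (kempe G φ x z u) := by
  intro f₁ hf₁ f₂ hf₂ hne hsh
  obtain ⟨w, hw1, hw2⟩ := hsh
  by_cases h1 : Sw G φ x z u f₁ <;> by_cases h2 : Sw G φ x z u f₂
  · rw [kempe_eq_of_sw h1, kempe_eq_of_sw h2]
    exact fun h => hp hf₁ hf₂ hne ⟨w, hw1, hw2⟩ (swapAt_inj h)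
  · -- f₂ cannot avoid the swap if its colour is x or z, since w is reachable
    rw [kempe_eq_of_sw h1, kempe_eq_of_not_sw h2]
    intro h
    have hcol : φ f₂ = x ∨ φ f₂ = z := by
      rcases swapAt_mem h1.2.1 with h' | h' <;> rw [h] at h' <;> [left; right] <;> exact h'
    exact h2 ⟨hf₂, hcol, w, hw2, reach_of_sw h1 hw1⟩
  · rw [kempe_eq_of_not_sw h1, kempe_eq_of_sw h2]
    intro h
    have hcol : φ f₁ = x ∨ φ f₁ = z := by
      rcases swapAt_mem h2.2.1 with h' | h' <;> rw [← h] at h' <;> [left; right] <;> exact h'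
    exact h1 ⟨hf₁, hcol, w, hw1, reach_of_sw h2 hw2⟩
  · rw [kempe_eq_of_not_sw h1, kempe_eq_of_not_sw h2]
    exact hp hf₁ hf₂ hne ⟨w, hw1, hw2⟩

lemma kempe_delta (hx : x ≠ 3) (hz : z ≠ 3) :
    {f ∈ G.edgeSet | kempe G φ x z u f = 3} = {f ∈ G.edgeSet | φ f = 3} := by
  ext f
  simp only [Set.mem_setOf_eq, and_congr_right_iff]
  intro hf
  by_cases h : Sw G φ x z u f
  · rw [kempe_eq_of_sw h]
    have h1 : φ f ≠ 3 := by rcases h.2.1 with h' | h' <;> rw [h'] <;> assumption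
    have h2 := swapAt_ne_of_ne (c := φ f) hx hz h1
    simp [h1, h2]
  · rw [kempe_eq_of_not_sw h]

end Kempe



lemma not_deltaMin_of_missing [Fintype V] {u v : V} {c : Fin 4} (hφ : IsDeltaMin G φ)
    (he : G.Adj u v) (hδ : φ s(u, v) = 3) (hc : c ≠ 3)
    (hu : MissingAt G φ c u) (hv : MissingAt G φ c v) : False := by
  classical
  set e : Sym2 V := s(u, v) with he'
  set ψ : Sym2 V → Fin 4 := fun f => if f = e then c else φ f with hψ
  have hψe : ψ e = c := by simp [hψ]
  have hψf : ∀ f, f ≠ e → ψ f = φ f := fun f hf => by simp [hψ, hf]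
  have hadj : ∀ f ∈ G.edgeSet, (∃ w, w ∈ f ∧ w ∈ e) → f ≠ e → φ f ≠ c := by
    rintro f hf ⟨w, hwf, hwe⟩ hfe
    rw [he', Sym2.mem_iff] at hwe
    obtain ⟨b, hb, rfl⟩ := exists_adj_of_mem_edge hf hwf
    rcases hwe with rfl | rfl
    · exact hu b hb
    · exact hv b hb
  have hproper : ProperOn G.edgeSet ψ := by
    intro f₁ hf₁ f₂ hf₂ hne hsh
    by_cases h1 : f₁ = e <;> by_cases h2 : f₂ = e
    · exact absurd (h1.trans h2.symm) hne
    · subst h1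
      rw [hψe, hψf _ h2]
      obtain ⟨w, hw1, hw2⟩ := hsh
      exact fun h => hadj f₂ hf₂ ⟨w, hw2, hw1⟩ h2 h.symm
    · subst h2
      rw [hψe, hψf _ h1]
      exact hadj f₁ hf₁ hsh h1
    · rw [hψf _ h1, hψf _ h2]
      exact hφ.1 hf₁ hf₂ hne hsh
  have hset : {f ∈ G.edgeSet | ψ f = 3} = {f ∈ G.edgeSet | φ f = 3} \ {e} := by
    ext f
    simp only [Set.mem_setOf_eq, Set.mem_diff, Set.mem_singleton_iff]
    constructor
    · rintro ⟨hf, h3⟩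
      have hfe : f ≠ e := by rintro rfl; rw [hψe] at h3; exact hc h3
      exact ⟨⟨hf, by rwa [hψf _ hfe] at h3⟩, hfe⟩
    · rintro ⟨⟨hf, h3⟩, hfe⟩
      exact ⟨hf, by rwa [hψf _ hfe]⟩
  have hmem : e ∈ {f ∈ G.edgeSet | φ f = 3} := ⟨he, hδ⟩
  have hlt : {f ∈ G.edgeSet | ψ f = 3}.ncard < {f ∈ G.edgeSet | φ f = 3}.ncard := by
    rw [hset]
    exact Set.ncard_diff_singleton_lt_of_mem hmem (Set.toFinite _)
  have hle : sColor G ≤ {f ∈ G.edgeSet | ψ f = 3}.ncard :=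
    Nat.sInf_le ⟨ψ, hproper, rfl⟩
  rw [← hφ.2] at hle
  omega

lemma reachable_of_missing [Fintype V] {u v : V} (hφ : IsDeltaMin G φ)
    (he : G.Adj u v) (hδ : φ s(u, v) = 3) (hx : x ≠ 3) (hz : z ≠ 3) (hxz : x ≠ z)
    (hu : MissingAt G φ x u) (hv : MissingAt G φ z v) :
    (twoColour G φ x z).Reachable u v := by
  by_contra hr
  set φ' := kempe G φ x z u with hφ'
  have hmin' : IsDeltaMin G φ' :=
    ⟨kempe_proper hφ.1, by rw [hφ', kempe_delta hx hz]; exact hφ.2⟩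
  have hδ' : φ' s(u, v) = 3 := by
    rw [hφ', kempe_eq_of_not_sw]
    · exact hδ
    · rintro ⟨-, h | h, -⟩ <;> rw [hδ] at h
      · exact hx h.symm
      · exact hz h.symm
  have hu' : MissingAt G φ' z u := by
    intro b hb
    by_cases h : Sw G φ x z u s(u, b)
    · rw [hφ', kempe_eq_of_sw h]
      have : φ s(u, b) = z := (h.2.1).resolve_left (hu b hb)
      rw [this]
      unfold swapAt
      split_ifs <;> simp_all
    · rw [hφ', kempe_eq_of_not_sw h]
      intro hc
      exact h ⟨G.mem_edgeSet.mpr hb, Or.inr hc,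
        u, Sym2.mem_mk_left _ _, Reachable.refl u⟩
  have hv' : MissingAt G φ' z v := by
    intro b hb
    by_cases h : Sw G φ x z u s(v, b)
    · exact absurd (reach_of_sw h (Sym2.mem_mk_left _ _)) hr
    · rw [hφ', kempe_eq_of_not_sw h]
      exact hv b hb
  exact not_deltaMin_of_missing hmin' he hδ' hz hu' hv'

section Walks

lemma walk_closed {H : SimpleGraph V} {S : Set V}
    (hcl : ∀ a ∈ S, ∀ b, H.Adj a b → b ∈ S) :
    ∀ {a w : V}, H.Walk a w → a ∈ S → w ∈ S := by
  intro a w W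
  induction W with
  | nil => exact id
  | cons h q ih => exact fun ha => ih (hcl _ ha _ h)

lemma path_closed {H : SimpleGraph V}
    (hdeg2 : ∀ a b₁ b₂ b₃, H.Adj a b₁ → H.Adj a b₂ → H.Adj a b₃ →
      b₁ = b₂ ∨ b₁ = b₃ ∨ b₂ = b₃) :
    ∀ {a v' : V} (W : H.Walk a v'), W.IsPath →
      (∀ b₁ b₂, H.Adj v' b₁ → H.Adj v' b₂ → b₁ = b₂) →
      ∀ pred, (∀ b, H.Adj a b → b ∈ W.support ∨ b = pred) →
      ∀ c ∈ W.support, ∀ b, H.Adj c b → b ∈ W.support ∨ b = pred := by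
  intro a v' W
  induction W with
  | nil =>
    intro _ _ pred hpred c hc b hcb
    rw [SimpleGraph.Walk.support_nil, List.mem_singleton] at hc
    subst hc
    exact hpred b hcb
  | @cons a a' w h W' ih =>
    intro hpath hv' pred hpred c hc b hcb
    rw [SimpleGraph.Walk.support_cons, List.mem_cons] at hc
    rcases hc with rfl | hc
    · have := hpred b hcb
      rwa [SimpleGraph.Walk.support_cons] at *
    · have hstep : ∀ b, H.Adj a' b → b ∈ W'.support ∨ b = a := by
        cases W' with
        | nil =>
          intro b hb
          exact Or.inr (hv' b a hb h.symm)
        | @cons _ a'' _ h'' W'' =>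
          intro b hb
          rcases hdeg2 a' b a a'' hb h.symm h'' with h1 | h1 | h1
          · exact Or.inr h1
          · subst h1
            exact Or.inl (by rw [SimpleGraph.Walk.support_cons]; exact
              List.mem_cons_of_mem _ W''.start_mem_support)
          · exfalso
            rw [SimpleGraph.Walk.cons_isPath_iff] at hpath
            exact hpath.2 (by rw [h1, SimpleGraph.Walk.support_cons]; exact
              List.mem_cons_of_mem _ W''.start_mem_support)
      rcases ih hpath.of_cons hv' a hstep c hc b hcb with h1 | rfl
      · exact Or.inl (by rw [SimpleGraph.Walk.support_cons]; exact List.mem_cons_of_mem _ h1)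
      · exact Or.inl (by rw [SimpleGraph.Walk.support_cons]; exact List.mem_cons_self)

lemma list_parity {x z : Fin 4} (hxz : x ≠ z) :
    ∀ (l : List (Fin 4)), (∀ c ∈ l, c = x ∨ c = z) → l.Chain' (· ≠ ·) →
      ∀ (h : l ≠ []), (Odd l.length ↔ l.head h = l.getLast h) := by
  intro l
  induction l with
  | nil => intro _ _ h; exact absurd rfl h
  | cons c t ih =>
    intro hmem hch h
    cases t with
    | nil => simp
    | cons c' t' =>
      have ht : (c' :: t') ≠ [] := by simp
      have hch' : (c' :: t').Chain' (· ≠ ·) := hch.tail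
      have hcc' : c ≠ c' := (List.isChain_cons_cons.mp hch).1
      have ihh := ih (fun d hd => hmem d (List.mem_cons_of_mem _ hd)) hch' ht
      have hlast : (c :: c' :: t').getLast h = (c' :: t').getLast ht :=
        List.getLast_cons ht
      have hhead : (c' :: t').head ht = c' := rfl
      rw [hlast, List.head_cons]
      have hlen : (c :: c' :: t').length = (c' :: t').length + 1 := rfl
      have heven : Even (c' :: t').length ↔ ¬((c' :: t').head ht = (c' :: t').getLast ht) := by
        rw [← Nat.not_odd_iff_even, ihh]
      rw [hlen, Nat.odd_add_one, Nat.not_odd_iff_even, heven, hhead]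
      have hc : c = x ∨ c = z := hmem c List.mem_cons_self
      have hc' : c' = x ∨ c' = z := hmem c' (List.mem_cons_of_mem _ List.mem_cons_self)
      have hg : (c' :: t').getLast ht = x ∨ (c' :: t').getLast ht = z :=
        hmem _ (List.mem_cons_of_mem _ (List.getLast_mem ht))
      have hxc : x = c ∨ x = c' := by
        rcases hc with h3 | h3
        · exact Or.inl h3.symm
        · rcases hc' with h4 | h4
          · exact Or.inr h4.symm
          · exact absurd (h3.trans h4.symm) hcc'
      have hzc : z = c ∨ z = c' := by
        rcases hc with h3 | h3
        · rcases hc' with h4 | h4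
          · exact absurd (h3.trans h4.symm) hcc'
          · exact Or.inr h4.symm
        · exact Or.inl h3.symm
      have hg2 : (c' :: t').getLast ht = c ∨ (c' :: t').getLast ht = c' := by
        rcases hg with h5 | h5
        · exact hxc.imp h5.trans h5.trans
        · exact hzc.imp h5.trans h5.trans
      rcases hg2 with h5 | h5
      · rw [h5]
        simp [hcc', Ne.symm hcc']
      · rw [h5]
        simp [hcc']

end Walks

section PathLemmas

lemma proper_ne (hp : ProperOn G.edgeSet φ) {a b c : V} (hab : G.Adj a b) (hac : G.Adj a c)
    (hbc : b ≠ c) : φ s(a, b) ≠ φ s(a, c) := by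
  refine hp hab hac (fun h => hbc ?_) ⟨a, by simp, by simp⟩
  exact (Sym2.congr_right.mp h)

lemma twoColour_edge_mem {f : Sym2 V} (hf : f ∈ (twoColour G φ x z).edgeSet) :
    f ∈ G.edgeSet ∧ (φ f = x ∨ φ f = z) := by
  unfold twoColour at hf
  rw [edgeSet_fromEdgeSet] at hf
  exact hf.1

/-- at most two neighbours in the two-coloured graph -/
lemma twoColour_deg2 (hp : ProperOn G.edgeSet φ) :
    ∀ a b₁ b₂ b₃, (twoColour G φ x z).Adj a b₁ → (twoColour G φ x z).Adj a b₂ →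
      (twoColour G φ x z).Adj a b₃ → b₁ = b₂ ∨ b₁ = b₃ ∨ b₂ = b₃ := by
  intro a b₁ b₂ b₃ h1 h2 h3
  by_contra hcon
  push_neg at hcon
  obtain ⟨h12, h13, h23⟩ := hcon
  obtain ⟨g1, c1⟩ := twoColour_adj.mp h1
  obtain ⟨g2, c2⟩ := twoColour_adj.mp h2
  obtain ⟨g3, c3⟩ := twoColour_adj.mp h3
  have n12 := proper_ne hp g1 g2 h12
  have n13 := proper_ne hp g1 g3 h13
  have n23 := proper_ne hp g2 g3 h23
  rcases c1 with e1 | e1 <;> rcases c2 with e2 | e2 <;> rcases c3 with e3 | e3 <;>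
    simp_all

/-- at most one neighbour in the two-coloured graph at a vertex missing one of the
two colours -/
lemma twoColour_deg1 (hp : ProperOn G.edgeSet φ) {c : Fin 4} {a : V}
    (hc : c = x ∨ c = z) (hm : MissingAt G φ c a) :
    ∀ b₁ b₂, (twoColour G φ x z).Adj a b₁ → (twoColour G φ x z).Adj a b₂ → b₁ = b₂ := by
  intro b₁ b₂ h1 h2
  by_contra h12
  obtain ⟨g1, c1⟩ := twoColour_adj.mp h1
  obtain ⟨g2, c2⟩ := twoColour_adj.mp h2
  have n12 := proper_ne hp g1 g2 h12
  have m1 := hm b₁ g1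
  have m2 := hm b₂ g2
  rcases hc with rfl | rfl <;> rcases c1 with e1 | e1 <;> rcases c2 with e2 | e2 <;>
    simp_all

/-- consecutive edges of a trail in the two-coloured graph have different colours -/
lemma walk_colour_chain (hp : ProperOn G.edgeSet φ) :
    ∀ {a b : V} (W : (twoColour G φ x z).Walk a b), W.IsTrail →
      W.edges.Chain' (fun e₁ e₂ => φ e₁ ≠ φ e₂) := by
  intro a b W
  induction W with
  | nil => intro _; exact List.isChain_nil
  | @cons a a' b h W' ih =>
    intro ht
    rw [SimpleGraph.Walk.edges_cons]; apply List.isChain_cons.mpr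
    rw [SimpleGraph.Walk.isTrail_cons] at ht
    refine ⟨?_, ih ht.1⟩
    intro f hf
    cases W' with
    | nil => simp at hf
    | @cons _ a'' _ h'' W'' =>
      rw [SimpleGraph.Walk.edges_cons] at hf
      simp only [List.head?_cons, Option.mem_some_iff] at hf
      subst hf
      have hne : s(a, a') ≠ s(a', a'') := by
        intro hq
        apply ht.2
        rw [hq, SimpleGraph.Walk.edges_cons]
        exact List.mem_cons_self
      have g1 : s(a, a') ∈ G.edgeSet := (twoColour_edge_mem ((twoColour G φ x z).mem_edgeSet.mpr h)).1
      have g2 : s(a', a'') ∈ G.edgeSet := (twoColour_edge_mem ((twoColour G φ x z).mem_edgeSet.mpr h'')).1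
      exact hp g1 g2 hne ⟨a', by simp, by simp⟩

/-- The main path lemma: the component of `u` in `φ(x,z)` is an even path to `v`. -/
lemma even_path (hp : ProperOn G.edgeSet φ) (hxz : x ≠ z) {u v : V} (huv : u ≠ v)
    (hu : MissingAt G φ x u) (hv : MissingAt G φ z v)
    (hr : (twoColour G φ x z).Reachable u v) :
    ∃ p : (twoColour G φ x z).Walk u v, p.IsPath ∧ Even p.length ∧
      ∀ w, (twoColour G φ x z).Reachable u w → w ∈ p.support := by
  classical
  obtain ⟨W⟩ := hr
  refine ⟨W.bypass, W.bypass_isPath, ?_, ?_⟩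
  · -- evenness
    set p := W.bypass with hp'
    have hne : p.edges ≠ [] := by
      intro hq
      have : p.length = 0 := by rw [← SimpleGraph.Walk.length_edges, hq]; rfl
      exact huv (SimpleGraph.Walk.eq_of_length_eq_zero this)
    set l : List (Fin 4) := p.edges.map φ with hl
    have hlne : l ≠ [] := by simpa [hl] using hne
    have hmem : ∀ c ∈ l, c = x ∨ c = z := by
      intro c hc
      rw [hl, List.mem_map] at hc
      obtain ⟨f, hf, rfl⟩ := hc
      exact (twoColour_edge_mem (SimpleGraph.Walk.edges_subset_edgeSet _ hf)).2
    have hch : l.Chain' (· ≠ ·) := by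
      rw [hl]; apply (List.isChain_map _).mpr
      exact walk_colour_chain hp p W.bypass_isPath.isTrail
    have hpar := list_parity hxz l hmem hch hlne
    -- head of l is z
    have hhead : l.head hlne = z := by
      obtain ⟨b, hadj, q, hq⟩ := SimpleGraph.Walk.exists_eq_cons_of_ne huv p
      have h1 : l = φ s(u, b) :: q.edges.map φ := by
        rw [hl, hq, SimpleGraph.Walk.edges_cons, List.map_cons]
      have h4 : l.head? = some (φ s(u, b)) := by rw [h1]; rfl
      have h5 : some (l.head hlne) = some (φ s(u, b)) := by
        rw [← List.head?_eq_head, h4]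
      rw [Option.some.injEq] at h5
      rw [h5]
      obtain ⟨g, hcol⟩ := twoColour_adj.mp hadj
      exact hcol.resolve_left (hu b g)
    -- last of l is x
    have hlast : l.getLast hlne = x := by
      have hrevne : l.reverse ≠ [] := by simpa using hlne
      have hrev : l.reverse = p.reverse.edges.map φ := by
        rw [hl, SimpleGraph.Walk.edges_reverse, List.map_reverse]
      obtain ⟨b, hadj, q, hq⟩ := SimpleGraph.Walk.exists_eq_cons_of_ne (Ne.symm huv) p.reverse
      have h2 : l.reverse = φ s(v, b) :: q.edges.map φ := by
        rw [hrev, hq, SimpleGraph.Walk.edges_cons, List.map_cons]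
      have h3 : l.getLast hlne = l.reverse.head hrevne := by
        rw [← List.head_reverse]
      have h4 : l.reverse.head? = some (φ s(v, b)) := by rw [h2]; rfl
      have h5 : some (l.reverse.head hrevne) = some (φ s(v, b)) := by
        rw [← List.head?_eq_head, h4]
      rw [Option.some.injEq] at h5
      rw [h3, h5]
      obtain ⟨g, hcol⟩ := twoColour_adj.mp hadj
      exact hcol.resolve_right (hv b g)
    have : ¬ Odd l.length := by
      rw [hpar, hhead, hlast]
      exact Ne.symm hxz
    have hlen : l.length = p.length := by rw [hl, List.length_map, SimpleGraph.Walk.length_edges]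
    rw [← hlen]
    exact Nat.not_odd_iff_even.mp this
  · -- closure
    set p := W.bypass with hp'
    have hpath := W.bypass_isPath
    have hvdeg := twoColour_deg1 (x := x) (z := z) hp (Or.inr rfl) hv
    have hudeg := twoColour_deg1 (x := x) (z := z) hp (Or.inl rfl) hu
    have hstart : ∀ b, (twoColour G φ x z).Adj u b → b ∈ p.support ∨ b = v := by
      obtain ⟨b₀, hadj, q, hq⟩ := SimpleGraph.Walk.exists_eq_cons_of_ne huv p
      intro b hb
      left
      rw [hudeg b b₀ hb hadj, hq, SimpleGraph.Walk.support_cons]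
      exact List.mem_cons_of_mem _ q.start_mem_support
    have hclosed := path_closed (twoColour_deg2 hp) p hpath hvdeg v hstart
    have hcl : ∀ a ∈ {w | w ∈ p.support}, ∀ b, (twoColour G φ x z).Adj a b →
        b ∈ {w | w ∈ p.support} := by
      intro a ha b hab
      rcases hclosed a ha b hab with h1 | rfl
      · exact h1
      · exact p.end_mem_support
    intro w hw
    obtain ⟨W'⟩ := hw
    exact walk_closed hcl W' p.start_mem_support

end PathLemmas

section Degrees

variable [Fintype V] [DecidableRel G.Adj]

/-- the set of colours appearing at `u`. -/
def coloursAt (G : SimpleGraph V) [DecidableRel G.Adj] (φ : Sym2 V → Fin 4) (u : V) :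
    Finset (Fin 4) :=
  (G.neighborFinset u).image (fun w => φ s(u, w))

lemma coloursAt_card (hp : ProperOn G.edgeSet φ) (u : V) :
    (coloursAt G φ u).card = G.degree u := by
  rw [coloursAt, Finset.card_image_of_injOn, G.card_neighborFinset_eq_degree]
  intro w₁ h1 w₂ h2 hw
  by_contra hne
  exact proper_ne hp (G.mem_neighborFinset u w₁ |>.mp h1)
    (G.mem_neighborFinset u w₂ |>.mp h2) hne hw

lemma not_mem_coloursAt_iff {c : Fin 4} {u : V} :
    c ∉ coloursAt G φ u ↔ MissingAt G φ c u := by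
  rw [coloursAt]
  simp only [Finset.mem_image, not_exists, MissingAt, SimpleGraph.mem_neighborFinset]
  constructor
  · intro h b hb
    exact fun hc => h b ⟨hb, hc⟩
  · rintro h b ⟨hb, hc⟩
    exact h b hb hc

lemma exists_missing (hp : ProperOn G.edgeSet φ) (hdeg : G.maxDegree ≤ 3)
    {u v : V} (he : G.Adj u v) (hδ : φ s(u, v) = 3) :
    ∃ c : Fin 4, c ≠ 3 ∧ MissingAt G φ c u := by
  by_contra hcon
  push_neg at hcon
  have hall : ∀ c : Fin 4, c ∈ coloursAt G φ u := by
    intro c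
    by_cases hc : c = 3
    · subst hc
      exact Finset.mem_image.mpr ⟨v, (G.mem_neighborFinset u v).mpr he, hδ⟩
    · by_contra h
      exact hcon c hc (not_mem_coloursAt_iff.mp h)
  have huniv : (Finset.univ : Finset (Fin 4)) ⊆ coloursAt G φ u :=
    fun c _ => hall c
  have h4 : 4 ≤ (coloursAt G φ u).card := by
    have := Finset.card_le_card huniv
    simpa using this
  rw [coloursAt_card hp] at h4
  have := G.degree_le_maxDegree u
  omega

lemma degree_sum (hφ : IsDeltaMin G φ) (hdeg : G.maxDegree ≤ 3)
    {u v : V} (he : G.Adj u v) (hδ : φ s(u, v) = 3) :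
    (G.degree u = 2 ∧ G.degree v = 3) ∨ (G.degree u = 3 ∧ G.degree v = 2) ∨
      (G.degree u = 3 ∧ G.degree v = 3) := by
  classical
  have hδ' : φ s(v, u) = 3 := by rwa [Sym2.eq_swap]
  have hcover : ∀ c : Fin 4, c ≠ 3 → c ∈ coloursAt G φ u ∨ c ∈ coloursAt G φ v := by
    intro c hc
    by_contra h
    push_neg at h
    exact not_deltaMin_of_missing hφ he hδ hc (not_mem_coloursAt_iff.mp h.1)
      (not_mem_coloursAt_iff.mp h.2)
  have h3u : (3 : Fin 4) ∈ coloursAt G φ u :=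
    Finset.mem_image.mpr ⟨v, (G.mem_neighborFinset u v).mpr he, hδ⟩
  have h3v : (3 : Fin 4) ∈ coloursAt G φ v :=
    Finset.mem_image.mpr ⟨u, (G.mem_neighborFinset v u).mpr he.symm, hδ'⟩
  have hsub : ({0, 1, 2} : Finset (Fin 4)) ⊆
      (coloursAt G φ u \ {3}) ∪ (coloursAt G φ v \ {3}) := by
    intro c hc
    have hc3 : c ≠ 3 := by fin_cases hc <;> decide
    rcases hcover c hc3 with h | h
    · exact Finset.mem_union_left _ (Finset.mem_sdiff.mpr ⟨h, by simpa using hc3⟩)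
    · exact Finset.mem_union_right _ (Finset.mem_sdiff.mpr ⟨h, by simpa using hc3⟩)
  have hcard3 : 3 ≤ ((coloursAt G φ u \ {3}) ∪ (coloursAt G φ v \ {3})).card := by
    have := Finset.card_le_card hsub
    simpa using this
  have hcu : (coloursAt G φ u \ {3}).card = (coloursAt G φ u).card - 1 := by
    rw [Finset.card_sdiff_of_subset (by simpa using h3u)]
    simp
  have hcv : (coloursAt G φ v \ {3}).card = (coloursAt G φ v).card - 1 := by
    rw [Finset.card_sdiff_of_subset (by simpa using h3v)]
    simp
  have hle := Finset.card_union_le (coloursAt G φ u \ {3}) (coloursAt G φ v \ {3})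
  rw [hcu, hcv, coloursAt_card hφ.1, coloursAt_card hφ.1] at hle
  have hdu : G.degree u ≤ 3 := le_trans (G.degree_le_maxDegree u) hdeg
  have hdv : G.degree v ≤ 3 := le_trans (G.degree_le_maxDegree v) hdeg
  have hdu1 : 1 ≤ G.degree u := by
    have : (coloursAt G φ u).Nonempty := ⟨3, h3u⟩
    have := Finset.card_pos.mpr this
    rwa [coloursAt_card hφ.1] at this
  have hdv1 : 1 ≤ G.degree v := by
    have : (coloursAt G φ v).Nonempty := ⟨3, h3v⟩
    have := Finset.card_pos.mpr this
    rwa [coloursAt_card hφ.1] at this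
  omega

end Degrees

end Aux

end Parsimonious
open Parsimonious in
/-- In a δ-minimum edge colouring `φ` of a connected graph of maximum
degree 3, every edge `e = uv` coloured `δ` has two colours `x, y` among `{α, β, γ}` such
that the component of `φ(x,y)` containing `u` is a path of even length joining `u`
and `v`; moreover one end of `e` has degree 2 and the other degree 3, or both ends
have degree 3. -/
theorem deltaMin_even_path_and_degrees {V : Type*} [Fintype V] (G : SimpleGraph V)
    [DecidableRel G.Adj] (hconn : G.Connected) (hdeg : G.maxDegree ≤ 3)
    (φ : Sym2 V → Fin 4) (hφ : IsDeltaMin G φ)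
    (u v : V) (he : G.Adj u v) (hδ : φ s(u, v) = 3) :
    (∃ x y : Fin 4, x ≠ y ∧ x ≠ 3 ∧ y ≠ 3 ∧
      ∃ p : (twoColour G φ x y).Walk u v, p.IsPath ∧ Even p.length ∧
        ∀ w, (twoColour G φ x y).Reachable u w → w ∈ p.support) ∧
    ((G.degree u = 2 ∧ G.degree v = 3) ∨ (G.degree u = 3 ∧ G.degree v = 2) ∨
      (G.degree u = 3 ∧ G.degree v = 3)) := by
  classical
  have hδ' : φ s(v, u) = 3 := by rwa [Sym2.eq_swap]
  obtain ⟨x, hx3, hxu⟩ := exists_missing hφ.1 hdeg he hδ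
  obtain ⟨z, hz3, hzv⟩ := exists_missing hφ.1 hdeg he.symm hδ'
  have hxz : x ≠ z := by
    rintro rfl
    exact not_deltaMin_of_missing hφ he hδ hx3 hxu hzv
  have hr := reachable_of_missing hφ he hδ hx3 hz3 hxz hxu hzv
  obtain ⟨p, hpath, heven, hsupp⟩ := even_path hφ.1 hxz (G.ne_of_adj he) hxu hzv hr
  exact ⟨⟨x, z, hxz, hx3, hz3, p, hpath, heven, hsupp⟩, degree_sum hφ hdeg he hδ⟩
end

section
/- Let G be a connected simple graph with maximum degree 3, φ a δ-minimum edge-colouring of G, and e = uv an edge coloured δ with d(u) = 3 and d(v) = 2, where u is incident to edges coloured α and β and v is incident to an edge coloured γ. Then e belongs to both A_φ ∩ B_φ: there is an alternating path of φ(α,γ) joining u and v and also an alternating path of φ(β,γ) joining u and v. -/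
open SimpleGraph

open Parsimonious in
private lemma kempe_reach {V : Type*} [Fintype V] (G : SimpleGraph V)
    (φ : Sym2 V → Fin 4) (hφ : IsDeltaMin G φ)
    (u v : V) (he : G.Adj u v) (hδ : φ s(u, v) = 3)
    (a : Fin 4) (ha : a = 0 ∨ a = 1)
    (hu : ∀ f ∈ G.edgeSet, u ∈ f → f ≠ s(u,v) → φ f = 0 ∨ φ f = 1)
    (hv : ∀ f ∈ G.edgeSet, v ∈ f → f ≠ s(u,v) → φ f = 2) :
    (twoColour G φ a 2).Reachable u v := by
  classical
  by_contra hreach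
  set H := twoColour G φ a 2 with hHdef
  have ha2 : a ≠ 2 := by rcases ha with h|h <;> subst h <;> decide
  have ha3 : a ≠ 3 := by rcases ha with h|h <;> subst h <;> decide
  have hHadj : ∀ x y : V, s(x,y) ∈ G.edgeSet → (φ s(x,y) = a ∨ φ s(x,y) = 2) →
      H.Adj x y := by
    intro x y hxy hc
    rw [hHdef, twoColour, SimpleGraph.fromEdgeSet_adj]
    exact ⟨⟨hxy, hc⟩, (G.mem_edgeSet.mp hxy).ne⟩
  set sw : Fin 4 → Fin 4 := fun c => if c = a then 2 else if c = 2 then a else c with hswdef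
  have hswa : sw a = 2 := by simp [hswdef]
  have hsw2 : sw 2 = a := by simp [hswdef, Ne.symm ha2]
  have hswmem : ∀ c, (c = a ∨ c = 2) → (sw c = a ∨ sw c = 2) := by
    rintro c (rfl|rfl)
    · exact Or.inr hswa
    · exact Or.inl hsw2
  have hswne : ∀ c d, (c = a ∨ c = 2) → (d = a ∨ d = 2) → c ≠ d → sw c ≠ sw d := by
    rintro c d (rfl|rfl) (rfl|rfl) hcd
    · exact absurd rfl hcd
    · rw [hswa, hsw2]; exact Ne.symm ha2
    · rw [hswa, hsw2]; exact ha2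
    · exact absurd rfl hcd
  set P : Sym2 V → Prop := fun f => (φ f = a ∨ φ f = 2) ∧ ∃ x, x ∈ f ∧ H.Reachable v x
    with hPdef
  set ψ : Sym2 V → Fin 4 := fun f => if f = s(u,v) then 2 else if P f then sw (φ f) else φ f
    with hψdef
  have hψe : ψ s(u,v) = 2 := by simp [hψdef]
  have hψ_ne : ∀ f, f ≠ s(u,v) → ψ f = if P f then sw (φ f) else φ f := by
    intro f hf; simp [hψdef, hf]
  have hPiff : ∀ x y : V, s(x,y) ∈ G.edgeSet → (φ s(x,y) = a ∨ φ s(x,y) = 2) →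
      (P s(x,y) ↔ H.Reachable v x) := by
    intro x y hmem hc
    constructor
    · rintro ⟨-, z, hz, hr⟩
      rcases Sym2.mem_iff.mp hz with rfl | rfl
      · exact hr
      · exact hr.trans (hHadj x z hmem hc).symm.reachable
    · intro hr
      exact ⟨hc, x, by simp, hr⟩
  -- edges sharing a vertex with e (other than e) don't get colour 2
  have hBne : ∀ f, f ∈ G.edgeSet → f ≠ s(u,v) → (u ∈ f ∨ v ∈ f) → ψ f ≠ 2 := by
    intro f hf hfe hshare
    rcases hshare with hw | hw
    · have h01 := hu f hf hw hfe
      have hPf : ¬ P f := by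
        rintro ⟨hc, x, hxf, hrx⟩
        obtain ⟨y, rfl⟩ := Sym2.mem_iff_exists.mp hw
        have hadj : H.Adj u y := hHadj u y hf hc
        have hru : H.Reachable v u := by
          rcases Sym2.mem_iff.mp hxf with rfl | rfl
          · exact hrx
          · exact hrx.trans hadj.symm.reachable
        exact hreach hru.symm
      rw [hψ_ne f hfe, if_neg hPf]
      rcases h01 with h|h <;> rw [h] <;> decide
    · have h2 := hv f hf hw hfe
      have hPf : P f := ⟨Or.inr h2, v, hw, SimpleGraph.Reachable.refl v⟩
      rw [hψ_ne f hfe, if_pos hPf, h2, hsw2]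
      exact ha2
  -- edges away from e stay properly coloured
  have hA : ∀ f₁ f₂, f₁ ∈ G.edgeSet → f₂ ∈ G.edgeSet → f₁ ≠ f₂ →
      f₁ ≠ s(u,v) → f₂ ≠ s(u,v) → (∃ w, w ∈ f₁ ∧ w ∈ f₂) → ψ f₁ ≠ ψ f₂ := by
    intro f₁ f₂ h1 h2 hne hne1 hne2 hsh
    obtain ⟨w, hw1, hw2⟩ := hsh
    have hφne : φ f₁ ≠ φ f₂ := hφ.1 h1 h2 hne ⟨w, hw1, hw2⟩
    rw [hψ_ne _ hne1, hψ_ne _ hne2]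
    by_cases hc1 : φ f₁ = a ∨ φ f₁ = 2 <;> by_cases hc2 : φ f₂ = a ∨ φ f₂ = 2
    · obtain ⟨y1, rfl⟩ := Sym2.mem_iff_exists.mp hw1
      obtain ⟨y2, rfl⟩ := Sym2.mem_iff_exists.mp hw2
      have e1 := hPiff w y1 h1 hc1
      have e2 := hPiff w y2 h2 hc2
      by_cases hr : H.Reachable v w
      · rw [if_pos (e1.mpr hr), if_pos (e2.mpr hr)]
        exact hswne _ _ hc1 hc2 hφne
      · rw [if_neg (fun hp => hr (e1.mp hp)), if_neg (fun hp => hr (e2.mp hp))]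
        exact hφne
    · rw [if_neg (show ¬ P f₂ from fun hp => hc2 hp.1)]
      by_cases hp1 : P f₁
      · rw [if_pos hp1]
        intro hEq; exact hc2 (hEq ▸ hswmem _ hc1)
      · rw [if_neg hp1]; exact hφne
    · rw [if_neg (show ¬ P f₁ from fun hp => hc1 hp.1)]
      by_cases hp2 : P f₂
      · rw [if_pos hp2]
        intro hEq; exact hc1 (hEq ▸ hswmem _ hc2)
      · rw [if_neg hp2]; exact hφne
    · rw [if_neg (show ¬ P f₁ from fun hp => hc1 hp.1),
        if_neg (show ¬ P f₂ from fun hp => hc2 hp.1)]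
      exact hφne
  have hproper : ProperOn G.edgeSet ψ := by
    intro f₁ h1 f₂ h2 hne hshare
    obtain ⟨w, hw1, hw2⟩ := hshare
    by_cases he1 : f₁ = s(u,v) <;> by_cases he2 : f₂ = s(u,v)
    · exact absurd (he1.trans he2.symm) hne
    · subst he1
      rw [hψe]
      have hsh : u ∈ f₂ ∨ v ∈ f₂ := by
        rcases Sym2.mem_iff.mp hw1 with rfl | rfl
        · exact Or.inl hw2
        · exact Or.inr hw2
      exact (hBne f₂ h2 he2 hsh).symm
    · subst he2
      rw [hψe]
      have hsh : u ∈ f₁ ∨ v ∈ f₁ := by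
        rcases Sym2.mem_iff.mp hw2 with rfl | rfl
        · exact Or.inl hw1
        · exact Or.inr hw1
      exact hBne f₁ h1 he1 hsh
    · exact hA f₁ f₂ h1 h2 hne he1 he2 ⟨w, hw1, hw2⟩
  have hψ3 : ∀ f, ψ f = 3 ↔ (φ f = 3 ∧ f ≠ s(u,v)) := by
    intro f
    by_cases hf : f = s(u,v)
    · subst hf; rw [hψe]
      constructor
      · intro h; exact absurd h (by decide)
      · rintro ⟨-, h⟩; exact absurd rfl h
    · rw [hψ_ne f hf]
      by_cases hp : P f
      · rw [if_pos hp]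
        have h1 := hswmem _ hp.1
        constructor
        · intro h
          rcases h1 with h'|h' <;> rw [h] at h' <;> [exact absurd h'.symm ha3; exact absurd h' (by decide)]
        · rintro ⟨h3, -⟩
          rcases hp.1 with h'|h' <;> rw [h3] at h' <;> [exact absurd h'.symm ha3; exact absurd h' (by decide)]
      · rw [if_neg hp]
        exact ⟨fun h => ⟨h, hf⟩, fun h => h.1⟩
  have hset : {f ∈ G.edgeSet | ψ f = 3} = {f ∈ G.edgeSet | φ f = 3} \ {s(u,v)} := by
    ext f
    simp only [Set.mem_setOf_eq, Set.mem_diff, Set.mem_singleton_iff, hψ3 f]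
    tauto
  have hemem : s(u,v) ∈ {f ∈ G.edgeSet | φ f = 3} := ⟨G.mem_edgeSet.mpr he, hδ⟩
  have hlt : {f ∈ G.edgeSet | ψ f = 3}.ncard < {f ∈ G.edgeSet | φ f = 3}.ncard := by
    rw [hset]
    exact Set.ncard_diff_singleton_lt_of_mem hemem (Set.toFinite _)
  have h2 : sColor G ≤ {f ∈ G.edgeSet | ψ f = 3}.ncard := Nat.sInf_le ⟨ψ, hproper, rfl⟩
  rw [hφ.2] at hlt
  exact absurd hlt (not_lt.mpr h2)

open Parsimonious in
/-- If `e = uv` is coloured `δ`, `d(u) = 3`, `d(v) = 2`, `u` is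
incident with edges coloured `α` and `β` and `v` is incident with an edge coloured `γ`,
then the ends of `e` are joined by an alternating path of `φ(α,γ)` and by an
alternating path of `φ(β,γ)`. -/
theorem deltaMin_degree_two_in_two_sets {V : Type*} [Fintype V] (G : SimpleGraph V)
    [DecidableRel G.Adj] (hconn : G.Connected) (hdeg : G.maxDegree ≤ 3)
    (φ : Sym2 V → Fin 4) (hφ : IsDeltaMin G φ)
    (u v : V) (he : G.Adj u v) (hδ : φ s(u, v) = 3)
    (hdu : G.degree u = 3) (hdv : G.degree v = 2)
    (hα : ∃ w, G.Adj u w ∧ φ s(u, w) = 0) (hβ : ∃ w, G.Adj u w ∧ φ s(u, w) = 1)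
    (hγ : ∃ w, G.Adj v w ∧ φ s(v, w) = 2) :
    (∃ p : (twoColour G φ 0 2).Walk u v, p.IsPath) ∧
    (∃ q : (twoColour G φ 1 2).Walk u v, q.IsPath) := by
  classical
  obtain ⟨w0, hw0, hc0⟩ := hα
  obtain ⟨w1, hw1, hc1⟩ := hβ
  obtain ⟨w2, hw2, hc2⟩ := hγ
  have hvw0 : v ≠ w0 := by
    intro h; subst h; rw [hc0] at hδ; exact absurd hδ (by decide)
  have hvw1 : v ≠ w1 := by
    intro h; subst h; rw [hc1] at hδ; exact absurd hδ (by decide)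
  have hw01 : w0 ≠ w1 := by
    intro h; subst h; rw [hc0] at hc1; exact absurd hc1 (by decide)
  have huw2 : u ≠ w2 := by
    intro h; subst h
    rw [Sym2.eq_swap] at hδ
    rw [hδ] at hc2; exact absurd hc2 (by decide)
  have hNu : G.neighborFinset u = {v, w0, w1} := by
    refine (Finset.eq_of_subset_of_card_le ?_ ?_).symm
    · intro x hx
      rcases Finset.mem_insert.mp hx with rfl | hx
      · exact (G.mem_neighborFinset _ _).mpr he
      rcases Finset.mem_insert.mp hx with rfl | hx
      · exact (G.mem_neighborFinset _ _).mpr hw0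
      rw [Finset.mem_singleton] at hx; subst hx
      exact (G.mem_neighborFinset _ _).mpr hw1
    · rw [G.card_neighborFinset_eq_degree, hdu]
      rw [Finset.card_insert_of_notMem (by simp [hvw0, hvw1]),
        Finset.card_insert_of_notMem (by simp [hw01]), Finset.card_singleton]
  have hNv : G.neighborFinset v = {u, w2} := by
    refine (Finset.eq_of_subset_of_card_le ?_ ?_).symm
    · intro x hx
      rcases Finset.mem_insert.mp hx with rfl | hx
      · exact (G.mem_neighborFinset _ _).mpr he.symm
      rw [Finset.mem_singleton] at hx; subst hx
      exact (G.mem_neighborFinset _ _).mpr hw2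
    · rw [G.card_neighborFinset_eq_degree, hdv]
      rw [Finset.card_insert_of_notMem (by simp [huw2]), Finset.card_singleton]
  have hu : ∀ f ∈ G.edgeSet, u ∈ f → f ≠ s(u,v) → φ f = 0 ∨ φ f = 1 := by
    intro f hf hm hne
    obtain ⟨y, rfl⟩ := Sym2.mem_iff_exists.mp hm
    have hy : y ∈ G.neighborFinset u := (G.mem_neighborFinset _ _).mpr (G.mem_edgeSet.mp hf)
    rw [hNu] at hy
    rcases Finset.mem_insert.mp hy with rfl | hy
    · exact absurd rfl hne
    rcases Finset.mem_insert.mp hy with rfl | hy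
    · exact Or.inl hc0
    rw [Finset.mem_singleton] at hy; subst hy
    exact Or.inr hc1
  have hv : ∀ f ∈ G.edgeSet, v ∈ f → f ≠ s(u,v) → φ f = 2 := by
    intro f hf hm hne
    obtain ⟨y, rfl⟩ := Sym2.mem_iff_exists.mp hm
    have hy : y ∈ G.neighborFinset v := (G.mem_neighborFinset _ _).mpr (G.mem_edgeSet.mp hf)
    rw [hNv] at hy
    rcases Finset.mem_insert.mp hy with rfl | hy
    · rw [Sym2.eq_swap] at hne; exact absurd rfl hne
    rw [Finset.mem_singleton] at hy; subst hy
    exact hc2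
  have h1 := kempe_reach G φ hφ u v he hδ 0 (Or.inl rfl) hu hv
  have h2 := kempe_reach G φ hφ u v he hδ 1 (Or.inr rfl) hu hv
  exact ⟨⟨h1.some.toPath.1, h1.some.toPath.2⟩, ⟨h2.some.toPath.1, h2.some.toPath.2⟩⟩
end
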